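/- Let d' be a metric on ℝⁿ for which there exists a continuous function f : [0,∞) → [0,∞) with f(1) = 1 such that d'(a•x, x) = f(‖a•x − x‖) for all x ∈ ℝⁿ and all a ≥ 0. Then the following are equivalent: (i) d' = d1, the radial metric; (ii) for all P1, P2 ∈ ℝⁿ, C_{d'}(P1,P2) = Crad(P1,P2). -/

import Mathlib

open Classical in
/-- The radial metric on ℝⁿ. -/
noncomputable def radialDist {n : ℕ} (A B : EuclideanSpace ℝ (Fin n)) : ℝ :=
  if (∃ a : ℝ, A = a • B) ∨ (∃ a : ℝ, B = a • A) then ‖A - B‖ else ‖A‖ + ‖B‖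

/-- `C_d(A,B) = {X | d(X,A) = d(X,B) + d(A,B)}`. -/
def Cd {M : Type*} (d : M → M → ℝ) (A B : M) : Set M :=
  {X | d X A = d X B + d A B}

open Classical in
/-- The candidate set `Crad(P1,P2)` for the radial metric. -/
noncomputable def Crad {n : ℕ} (P1 P2 : EuclideanSpace ℝ (Fin n)) :
    Set (EuclideanSpace ℝ (Fin n)) :=
  if P1 = P2 then Set.univ
  else if h : ∃ s : ℝ, s ∈ Set.Ico (0 : ℝ) 1 ∧ P2 = s • P1 then
    Set.univ \ {X | ∃ t : ℝ, Classical.choose h < t ∧ X = t • P1}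
  else {X | ∃ t : ℝ, 1 ≤ t ∧ X = t • P2}

variable {n : ℕ}

lemma rd_symm (A B : EuclideanSpace ℝ (Fin n)) : radialDist A B = radialDist B A := by
  unfold radialDist
  by_cases h : (∃ a : ℝ, A = a • B) ∨ (∃ a : ℝ, B = a • A)
  · rw [if_pos h, if_pos (Or.symm h), norm_sub_rev]
  · rw [if_neg h, if_neg (fun h' => h (Or.symm h')), add_comm]

lemma rd_self (A : EuclideanSpace ℝ (Fin n)) : radialDist A A = 0 := by
  unfold radialDist
  rw [if_pos (Or.inl ⟨1, (one_smul ℝ A).symm⟩), sub_self, norm_zero]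

lemma rd_smul_smul (x : EuclideanSpace ℝ (Fin n)) (t s : ℝ) :
    radialDist (t • x) (s • x) = |t - s| * ‖x‖ := by
  unfold radialDist
  have hdep : (∃ a : ℝ, t • x = a • (s • x)) ∨ (∃ a : ℝ, s • x = a • (t • x)) := by
    by_cases hs : s = 0
    · right; exact ⟨0, by simp [hs]⟩
    · left; exact ⟨t / s, by rw [smul_smul, div_mul_cancel₀ _ hs]⟩
  rw [if_pos hdep, ← sub_smul, norm_smul, Real.norm_eq_abs]

lemma rd_zero_right (A : EuclideanSpace ℝ (Fin n)) : radialDist A 0 = ‖A‖ := by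
  unfold radialDist
  rw [if_pos (Or.inr ⟨0, (zero_smul ℝ A).symm⟩), sub_zero]

lemma rd_zero_left (A : EuclideanSpace ℝ (Fin n)) : radialDist 0 A = ‖A‖ := by
  rw [rd_symm, rd_zero_right]

lemma rd_indep {X y : EuclideanSpace ℝ (Fin n)} (hy : y ≠ 0) (h : ∀ t : ℝ, X ≠ t • y) :
    radialDist X y = ‖X‖ + ‖y‖ := by
  unfold radialDist
  rw [if_neg]
  rintro (⟨a, ha⟩ | ⟨a, ha⟩)
  · exact h a ha
  · have ha' : a ≠ 0 := by rintro rfl; simp at ha; exact hy ha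
    exact h a⁻¹ (by rw [ha, smul_smul, inv_mul_cancel₀ ha', one_smul])

lemma smul_cancel {x : EuclideanSpace ℝ (Fin n)} (hx : x ≠ 0) {u t : ℝ}
    (h : u • x = t • x) : u = t := by
  by_contra hne
  have h0 : (u - t) • x = 0 := by rw [sub_smul, h, sub_self]
  rcases smul_eq_zero.mp h0 with h' | h'
  · exact hne (sub_eq_zero.mp h')
  · exact hx h'

lemma cd_rd (P1 P2 : EuclideanSpace ℝ (Fin n)) : Cd radialDist P1 P2 = Crad P1 P2 := by
  unfold Crad
  split_ifs with h1 h2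
  · subst h1; ext X; simp [Cd, rd_self]
  · -- P2 = s • P1 with s ∈ [0,1)
    have hspec := Classical.choose_spec h2
    set s := Classical.choose h2 with hsdef
    obtain ⟨⟨hs0, hs1⟩, hP2⟩ := hspec
    have hP1 : P1 ≠ 0 := by rintro rfl; exact h1 (by rw [hP2, smul_zero])
    have hN : 0 < ‖P1‖ := norm_pos_iff.mpr hP1
    have h12 : radialDist P1 P2 = (1 - s) * ‖P1‖ := by
      have e := rd_smul_smul P1 1 s; rw [one_smul] at e
      rw [hP2, e, abs_of_pos (by linarith : (0:ℝ) < 1 - s)]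
    ext X
    simp only [Cd, Set.mem_setOf_eq, Set.mem_diff, Set.mem_univ, true_and]
    by_cases hX : ∃ u : ℝ, X = u • P1
    · obtain ⟨u, rfl⟩ := hX
      have e1 := rd_smul_smul P1 u 1; rw [one_smul] at e1
      have e2 : radialDist (u • P1) P2 = |u - s| * ‖P1‖ := by
        rw [hP2]; exact rd_smul_smul ..
      have hiff : (∃ t : ℝ, s < t ∧ u • P1 = t • P1) ↔ s < u :=
        ⟨fun ⟨t, hst, he⟩ => (smul_cancel hP1 he) ▸ hst, fun h => ⟨u, h, rfl⟩⟩
      rw [e1, e2, h12, hiff, not_lt]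
      constructor
      · intro he
        have he' : |u - 1| = |u - s| + (1 - s) :=
          mul_right_cancel₀ (ne_of_gt hN) (by rw [add_mul]; linarith [he])
        by_contra hgt; push_neg at hgt
        rw [abs_of_pos (by linarith : (0:ℝ) < u - s)] at he'
        rcases abs_cases (u - 1) with ⟨e, _⟩ | ⟨e, _⟩ <;> rw [e] at he' <;> linarith
      · intro hu
        rw [abs_of_nonpos (by linarith : u - 1 ≤ 0), abs_of_nonpos (by linarith : u - s ≤ 0)]
        ring
    · have hX' : ∀ t : ℝ, X ≠ t • P1 := by push_neg at hX; exact hX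
      have e1 : radialDist X P1 = ‖X‖ + ‖P1‖ := rd_indep hP1 hX'
      have e2 : radialDist X P2 = ‖X‖ + s * ‖P1‖ := by
        rcases eq_or_lt_of_le hs0 with h0 | h0
        · rw [hP2, ← h0, zero_smul, rd_zero_right]; ring
        · rw [hP2, rd_indep (smul_ne_zero (ne_of_gt h0) hP1)
            (fun t ht => hX' (t * s) (by rw [ht, smul_smul])),
            norm_smul, Real.norm_eq_abs, abs_of_pos h0]
      refine iff_of_true ?_ ?_
      · rw [e1, e2, h12]; ring
      · rintro ⟨t, _, ht⟩; exact hX' t ht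
  · -- third case
    ext X
    simp only [Cd, Set.mem_setOf_eq]
    by_cases hdep : ∃ s : ℝ, P2 = s • P1
    · obtain ⟨s, hP2⟩ := hdep
      have hP1 : P1 ≠ 0 := by rintro rfl; exact h1 (by rw [hP2, smul_zero])
      have hN : 0 < ‖P1‖ := norm_pos_iff.mpr hP1
      have hs' : s < 0 ∨ 1 < s := by
        by_contra hc; push_neg at hc
        obtain ⟨hc0, hc1⟩ := hc
        rcases eq_or_lt_of_le hc1 with he | hlt
        · exact h1 (by rw [hP2, he, one_smul])
        · exact h2 ⟨s, ⟨hc0, hlt⟩, hP2⟩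
      have hsne : s ≠ 0 := by rcases hs' with h | h; exacts [ne_of_lt h, by linarith]
      have h12 : radialDist P1 P2 = |1 - s| * ‖P1‖ := by
        have e := rd_smul_smul P1 1 s; rw [one_smul] at e; rw [hP2, e]
      by_cases hX : ∃ u : ℝ, X = u • P1
      · obtain ⟨u, rfl⟩ := hX
        have e1 := rd_smul_smul P1 u 1; rw [one_smul] at e1
        have e2 : radialDist (u • P1) P2 = |u - s| * ‖P1‖ := by
          rw [hP2]; exact rd_smul_smul ..
        have hmem : (∃ t : ℝ, 1 ≤ t ∧ u • P1 = t • P2) ↔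
            ((s < 0 ∧ u ≤ s) ∨ (1 < s ∧ s ≤ u)) := by
          constructor
          · rintro ⟨t, ht1, hte⟩
            rw [hP2, smul_smul] at hte
            have hut : u = t * s := smul_cancel hP1 hte
            rcases hs' with h | h
            · left; exact ⟨h, by nlinarith⟩
            · right; exact ⟨h, by nlinarith⟩
          · rintro (⟨hs0, hu⟩ | ⟨hs0, hu⟩)
            · refine ⟨u / s, ?_, by rw [hP2, smul_smul, div_mul_cancel₀ _ hsne]⟩
              rw [le_div_iff_of_neg hs0]; linarith
            · refine ⟨u / s, ?_, by rw [hP2, smul_smul, div_mul_cancel₀ _ hsne]⟩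
              rw [le_div_iff₀ (by linarith : (0:ℝ) < s)]; linarith
        rw [e1, e2, h12, hmem]
        constructor
        · intro he
          have he' : |u - 1| = |u - s| + |1 - s| :=
            mul_right_cancel₀ (ne_of_gt hN) (by rw [add_mul]; linarith [he])
          rcases hs' with h | h
          · left; refine ⟨h, ?_⟩
            by_contra hgt; push_neg at hgt
            rw [abs_of_pos (by linarith : (0:ℝ) < u - s),
              abs_of_pos (by linarith : (0:ℝ) < 1 - s)] at he'
            rcases abs_cases (u - 1) with ⟨e, _⟩ | ⟨e, _⟩ <;> rw [e] at he' <;> linarith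
          · right; refine ⟨h, ?_⟩
            by_contra hgt; push_neg at hgt
            rw [abs_of_neg (by linarith : u - s < 0),
              abs_of_neg (by linarith : 1 - s < 0)] at he'
            rcases abs_cases (u - 1) with ⟨e, _⟩ | ⟨e, _⟩ <;> rw [e] at he' <;> linarith
        · rintro (⟨h, hu⟩ | ⟨h, hu⟩)
          · rw [abs_of_nonpos (by linarith : u - 1 ≤ 0),
              abs_of_nonpos (by linarith : u - s ≤ 0),
              abs_of_pos (by linarith : (0:ℝ) < 1 - s)]; ring
          · rw [abs_of_pos (by linarith : (0:ℝ) < u - 1),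
              abs_of_nonneg (by linarith : (0:ℝ) ≤ u - s),
              abs_of_neg (by linarith : 1 - s < 0)]; ring
      · have hX' : ∀ t : ℝ, X ≠ t • P1 := by push_neg at hX; exact hX
        have e1 : radialDist X P1 = ‖X‖ + ‖P1‖ := rd_indep hP1 hX'
        have e2 : radialDist X P2 = ‖X‖ + |s| * ‖P1‖ := by
          rw [hP2, rd_indep (smul_ne_zero hsne hP1)
            (fun t ht => hX' (t * s) (by rw [ht, smul_smul])),
            norm_smul, Real.norm_eq_abs]
        refine iff_of_false ?_ (fun ⟨t, _, ht⟩ => hX' (t * s) (by rw [ht, hP2, smul_smul])) 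
        rw [e1, e2, h12]
        intro he
        rcases hs' with h | h
        · rw [abs_of_neg h, abs_of_pos (by linarith : (0:ℝ) < 1 - s)] at he; nlinarith
        · rw [abs_of_pos (by linarith : (0:ℝ) < s),
            abs_of_neg (by linarith : 1 - s < 0)] at he; nlinarith
    · have hP2ne : P2 ≠ 0 := by rintro rfl; exact hdep ⟨0, (zero_smul ℝ P1).symm⟩
      have hN2 : 0 < ‖P2‖ := norm_pos_iff.mpr hP2ne
      have h12 : radialDist P1 P2 = ‖P1‖ + ‖P2‖ := by
        by_cases hP1 : P1 = 0
        · rw [hP1, rd_zero_left, norm_zero, zero_add]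
        · refine rd_indep hP2ne (fun t ht => ?_)
          rcases eq_or_ne t 0 with rfl | htne
          · rw [zero_smul] at ht; exact hP1 ht
          · exact hdep ⟨t⁻¹, by rw [ht, smul_smul, inv_mul_cancel₀ htne, one_smul]⟩
      by_cases hX : ∃ t : ℝ, X = t • P2
      · obtain ⟨t, rfl⟩ := hX
        have e2 := rd_smul_smul P2 t 1; rw [one_smul] at e2
        have hmem : (∃ t' : ℝ, 1 ≤ t' ∧ t • P2 = t' • P2) ↔ 1 ≤ t :=
          ⟨fun ⟨t', h1', he⟩ => (smul_cancel hP2ne he) ▸ h1', fun h => ⟨t, h, rfl⟩⟩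
        rcases eq_or_ne t 0 with rfl | ht0
        · simp only [zero_smul] at e2 hmem ⊢
          rw [rd_zero_left, e2, h12, hmem]
          refine iff_of_false (fun he => ?_) (by norm_num)
          rw [zero_sub, abs_neg, abs_one] at he; linarith
        · by_cases hP1 : P1 = 0
          · subst hP1
            rw [rd_zero_right, norm_smul, Real.norm_eq_abs, e2, h12,
              norm_zero, zero_add, hmem]
            constructor
            · intro he; by_contra hlt; push_neg at hlt
              rw [abs_of_neg (by linarith : t - 1 < 0)] at he
              rcases abs_cases t with ⟨e, _⟩ | ⟨e, _⟩ <;> rw [e] at he <;> nlinarith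
            · intro h
              rw [abs_of_pos (by linarith : (0:ℝ) < t),
                abs_of_nonneg (by linarith : (0:ℝ) ≤ t - 1)]; ring
          · have hN1 : 0 < ‖P1‖ := norm_pos_iff.mpr hP1
            have e1 : radialDist (t • P2) P1 = |t| * ‖P2‖ + ‖P1‖ := by
              rw [rd_indep hP1 (fun a ha => ?_), norm_smul, Real.norm_eq_abs]
              have : P2 = (t⁻¹ * a) • P1 := by
                rw [mul_smul, ← ha, smul_smul, inv_mul_cancel₀ ht0, one_smul]
              exact hdep ⟨t⁻¹ * a, this⟩
            rw [e1, e2, h12, hmem]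
            constructor
            · intro he; by_contra hlt; push_neg at hlt
              have he' : |t| = |t - 1| + 1 := by nlinarith
              rw [abs_of_neg (by linarith : t - 1 < 0)] at he'
              rcases abs_cases t with ⟨e, _⟩ | ⟨e, _⟩ <;> rw [e] at he' <;> linarith
            · intro h
              rw [abs_of_pos (by linarith : (0:ℝ) < t),
                abs_of_nonneg (by linarith : (0:ℝ) ≤ t - 1)]; ring
      · have hX' : ∀ t : ℝ, X ≠ t • P2 := by push_neg at hX; exact hX
        have e2 : radialDist X P2 = ‖X‖ + ‖P2‖ := rd_indep hP2ne hX'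
        refine iff_of_false (fun he => ?_) (fun ⟨t, _, ht⟩ => hX' t ht)
        rw [e2, h12] at he
        by_cases hP1 : P1 = 0
        · rw [hP1, rd_zero_right, norm_zero] at he; linarith
        · by_cases hXP1 : ∃ a : ℝ, X = a • P1
          · obtain ⟨a, rfl⟩ := hXP1
            have e1 := rd_smul_smul P1 a 1; rw [one_smul] at e1
            rw [e1, norm_smul, Real.norm_eq_abs] at he
            have hN1 : 0 < ‖P1‖ := norm_pos_iff.mpr hP1
            rcases abs_cases (a - 1) with ⟨e, _⟩ | ⟨e, _⟩ <;>
              rcases abs_cases a with ⟨e', _⟩ | ⟨e', _⟩ <;>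
              rw [e, e'] at he <;> nlinarith
          · push_neg at hXP1
            rw [rd_indep hP1 hXP1] at he; linarith


theorem radial_identification {n : ℕ}
    (d' : EuclideanSpace ℝ (Fin n) → EuclideanSpace ℝ (Fin n) → ℝ)
    (hd_eq : ∀ x y, d' x y = 0 ↔ x = y)
    (hd_symm : ∀ x y, d' x y = d' y x)
    (hd_tri : ∀ x y z, d' x z ≤ d' x y + d' y z)
    (f : ℝ → ℝ)
    (hf_cont : ContinuousOn f (Set.Ici 0))
    (hf_nonneg : ∀ u ∈ Set.Ici (0 : ℝ), 0 ≤ f u)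
    (hf_one : f 1 = 1)
    (hf : ∀ (x : EuclideanSpace ℝ (Fin n)) (a : ℝ), 0 ≤ a →
      d' (a • x) x = f ‖a • x - x‖) :
    (∀ x y, d' x y = radialDist x y) ↔
    (∀ P1 P2, Cd d' P1 P2 = Crad P1 P2) := by
  constructor
  · intro hdd P1 P2
    have hcd : Cd d' P1 P2 = Cd radialDist P1 P2 := by
      ext X; simp only [Cd, Set.mem_setOf_eq, hdd]
    rw [hcd, cd_rd]
  · intro hC x y
    by_cases hne : Nonempty (Fin n)
    swap
    · have hsub : x = y := by ext i; exact absurd ⟨i⟩ hne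
      rw [hsub, rd_self]; exact (hd_eq y y).mpr rfl
    obtain ⟨i⟩ := hne
    -- basic consequences
    have hd0 : ∀ z : EuclideanSpace ℝ (Fin n), d' 0 z = f ‖z‖ := fun z => by
      have h := hf z 0 le_rfl
      rwa [zero_smul, zero_sub, norm_neg] at h
    have hf0 : f 0 = 0 := by
      have h1 := hf 0 1 zero_le_one
      simp only [smul_zero, sub_zero, norm_zero] at h1
      rw [← h1]; exact (hd_eq 0 0).mpr rfl
    -- extraction from the Crad hypothesis
    have key : ∀ (z : EuclideanSpace ℝ (Fin n)), z ≠ 0 → ∀ s : ℝ, 0 ≤ s → s < 1 →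
        ∀ X : EuclideanSpace ℝ (Fin n), (∀ t : ℝ, s < t → X ≠ t • z) →
        d' X z = d' X (s • z) + d' z (s • z) := by
      intro z hz s hs0 hs1 X hX
      have hne' : z ≠ s • z := by
        intro h
        have h1 : (1 : ℝ) = s := smul_cancel hz (by rw [one_smul, ← h])
        linarith
      have hcd := hC z (s • z)
      unfold Crad at hcd
      rw [if_neg hne'] at hcd
      have hex : ∃ s' : ℝ, s' ∈ Set.Ico (0:ℝ) 1 ∧ s • z = s' • z := ⟨s, ⟨hs0, hs1⟩, rfl⟩
      rw [dif_pos hex] at hcd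
      have hch : Classical.choose hex = s :=
        (smul_cancel hz (Classical.choose_spec hex).2).symm
      have hmem : X ∈ Cd d' z (s • z) := by
        rw [hcd]
        refine ⟨trivial, ?_⟩
        rintro ⟨t, hst, hXt⟩
        rw [hch] at hst
        exact hX t hst hXt
      exact hmem
    -- additivity of f
    have hadd : ∀ u v : ℝ, 0 ≤ u → 0 < v → f (u + v) = f u + f v := by
      intro u v hu hv
      have huv : 0 < u + v := by linarith
      set P1 : EuclideanSpace ℝ (Fin n) := EuclideanSpace.single i (u + v) with hP1def
      have hnorm : ‖P1‖ = u + v := by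
        rw [hP1def, EuclideanSpace.norm_single, Real.norm_eq_abs,
          abs_of_nonneg (le_of_lt huv)]
      have hP1ne : P1 ≠ 0 := by
        intro h; rw [h, norm_zero] at hnorm; linarith
      set s : ℝ := u / (u + v) with hsdef
      have hs0 : 0 ≤ s := div_nonneg hu (le_of_lt huv)
      have hs1 : s < 1 := by rw [hsdef, div_lt_one huv]; linarith
      have h0 := key P1 hP1ne s hs0 hs1 0 (fun t ht h => by
        rcases smul_eq_zero.mp h.symm with h' | h'
        · rw [h'] at ht; exact absurd ht (not_lt.mpr hs0)
        · exact hP1ne h')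
      have e1 : d' 0 P1 = f (u + v) := by rw [hd0, hnorm]
      have e2 : d' 0 (s • P1) = f u := by
        rw [hd0, norm_smul, Real.norm_eq_abs, abs_of_nonneg hs0, hnorm]
        congr 1
        rw [hsdef, div_mul_cancel₀ _ (ne_of_gt huv)]
      have e3 : d' P1 (s • P1) = f v := by
        rw [hd_symm, hf P1 s hs0]
        congr 1
        have hss : s • P1 - P1 = (s - 1) • P1 := by rw [sub_smul, one_smul]
        rw [hss, norm_smul, Real.norm_eq_abs,
          abs_of_neg (by linarith : s - 1 < 0), hnorm, hsdef]
        field_simp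
        ring
      rw [← e1, ← e2, ← e3]; exact h0
    -- monotonicity
    have hmono : ∀ a b : ℝ, 0 ≤ a → a ≤ b → f a ≤ f b := by
      intro a b ha hab
      rcases eq_or_lt_of_le hab with rfl | h
      · exact le_refl _
      · have heq : a + (b - a) = b := by ring
        have h2 := hadd a (b - a) ha (by linarith)
        rw [heq] at h2
        have h3 := hf_nonneg (b - a) (Set.mem_Ici.mpr (by linarith))
        linarith
    -- natural multiples
    have hnat : ∀ (k : ℕ) (u : ℝ), 0 ≤ u → f (k * u) = k * f u := by
      intro k
      induction k with
      | zero => intro u hu; simp [hf0]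
      | succ m ih =>
        intro u hu
        rcases eq_or_lt_of_le hu with h | hu'
        · rw [← h, mul_zero, hf0, mul_zero]
        · have hcast : ((m + 1 : ℕ) : ℝ) * u = (m : ℝ) * u + u := by push_cast; ring
          rw [hcast, hadd ((m:ℝ) * u) u (by positivity) hu', ih u hu]
          push_cast; ring
    -- rational values
    have hq : ∀ (p q : ℕ), 0 < q → f ((p : ℝ) / (q : ℝ)) = (p : ℝ) / (q : ℝ) := by
      intro p q hqpos
      have hqne : (q : ℝ) ≠ 0 := ne_of_gt (by exact_mod_cast hqpos)
      have h1 : (q : ℝ) * ((p : ℝ) / q) = p := by field_simp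
      have h2 := hnat q ((p:ℝ)/q) (by positivity)
      rw [h1] at h2
      have h3 : f (p : ℝ) = p := by
        have h4 := hnat p 1 zero_le_one
        rw [mul_one, hf_one, mul_one] at h4; exact h4
      rw [h3] at h2
      rw [eq_div_iff hqne]
      linarith
    have hfrat : ∀ r : ℚ, 0 ≤ (r : ℝ) → f r = r := by
      intro r hr0
      have hnum : 0 ≤ r.num := Rat.num_nonneg.mpr (by exact_mod_cast hr0)
      have hrw : (r : ℝ) = (r.num.toNat : ℝ) / (r.den : ℝ) := by
        rw [Rat.cast_def]; congr 1; exact_mod_cast (Int.toNat_of_nonneg hnum).symm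
      rw [hrw]; exact hq _ _ r.den_pos
    -- f is the identity on [0, ∞)
    have flin : ∀ u : ℝ, 0 ≤ u → f u = u := by
      intro u hu
      by_contra hnef
      rcases lt_or_gt_of_ne hnef with h | h
      · obtain ⟨r, hr1, hr2⟩ := exists_rat_btwn h
        have hr0 : 0 ≤ (r : ℝ) :=
          le_trans (hf_nonneg u (Set.mem_Ici.mpr hu)) (le_of_lt hr1)
        have hm := hmono r u hr0 (le_of_lt hr2)
        rw [hfrat r hr0] at hm; linarith
      · obtain ⟨r, hr1, hr2⟩ := exists_rat_btwn h
        have hr0 : 0 ≤ (r : ℝ) := le_trans hu (le_of_lt hr1)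
        have hm := hmono u r hu (le_of_lt hr1)
        rw [hfrat r hr0] at hm; linarith
    -- distance to non-ray points
    have hfar : ∀ (z X : EuclideanSpace ℝ (Fin n)), z ≠ 0 →
        (∀ t : ℝ, 0 < t → X ≠ t • z) → d' X z = ‖X‖ + ‖z‖ := by
      intro z X hz hX
      have h0 := key z hz 0 le_rfl one_pos X hX
      rw [zero_smul] at h0
      rw [h0, hd_symm X 0, hd_symm z 0, hd0, hd0,
        flin _ (norm_nonneg _), flin _ (norm_nonneg _)]
    -- points on a common line
    have hray : ∀ (z : EuclideanSpace ℝ (Fin n)) (t : ℝ), z ≠ 0 →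
        d' (t • z) z = radialDist (t • z) z := by
      intro z t hz
      have erd := rd_smul_smul z t 1; rw [one_smul] at erd
      rcases le_or_gt 0 t with ht | ht
      · rw [hf z t ht, erd]
        have hss : t • z - z = (t - 1) • z := by rw [sub_smul, one_smul]
        rw [hss, norm_smul, Real.norm_eq_abs, flin _ (by positivity)]
      · rw [erd, hfar z (t • z) hz (fun t' ht' h => by
          have := smul_cancel hz h; linarith)]
        rw [norm_smul, Real.norm_eq_abs, abs_of_neg ht,
          abs_of_neg (by linarith : t - 1 < 0)]
        ring
    -- final case analysis
    by_cases hxz : ∃ t : ℝ, y = t • x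
    · obtain ⟨t, rfl⟩ := hxz
      by_cases hx0 : x = 0
      · subst hx0
        rw [smul_zero, rd_self]; exact (hd_eq 0 0).mpr rfl
      · rw [hd_symm, rd_symm]; exact hray x t hx0
    · by_cases hzx : ∃ t : ℝ, x = t • y
      · obtain ⟨t, rfl⟩ := hzx
        have hy0 : y ≠ 0 := fun h => hxz ⟨0, by rw [h, zero_smul]⟩
        exact hray y t hy0
      · have hx0 : x ≠ 0 := fun h => hzx ⟨0, by rw [h, zero_smul]⟩
        push_neg at hxz
        rw [hd_symm, rd_symm, hfar x y hx0 (fun t _ h => hxz t h), rd_indep hx0 hxz]
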